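/- arXiv:2509.11248 — 3 statements merged into one kernel-verified Lean document; each statement's English description precedes it below -/
import Mathlib

section
/- The function x ↦ 1/(|x|(x+1)(π² + (log|1 + 1/x|)²)) for x ∈ (-1, 0) is a probability density; that is, its integral over (-1,0) equals 1. -/
open MeasureTheory Real

open Set Filter Topology in
/-- The density of the limiting zero distribution of Fubini polynomials integrates
to one over `(-1,0)`. -/
theorem stmt_4 :
    ∫ x in Set.Ioo (-1 : ℝ) 0,
        1 / (|x| * (x + 1) * (Real.pi ^ 2 + (Real.log |1 + 1 / x|) ^ 2)) = 1 := by
  set f' : ℝ → ℝ := fun x =>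
    1 / (|x| * (x + 1) * (Real.pi ^ 2 + (Real.log |1 + 1 / x|) ^ 2)) with hf'def
  set F : ℝ → ℝ := fun x => Real.arctan ((Real.log (x + 1) - Real.log (-x)) / π) / π with hFdef
  have hπ : (0:ℝ) < π := Real.pi_pos
  -- derivative
  have hderiv : ∀ x ∈ Ioo (-1:ℝ) 0, HasDerivAt F (f' x) x := by
    intro x hx
    have hx1 : (0:ℝ) < x + 1 := by linarith [hx.1]
    have hx2 : x < 0 := hx.2
    have hx0 : x ≠ 0 := ne_of_lt hx2
    have h1 : HasDerivAt (fun y : ℝ => Real.log (y + 1)) (1 / (x + 1)) x :=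
      ((hasDerivAt_id x).add_const 1).log (ne_of_gt hx1)
    have h2 : HasDerivAt (fun y : ℝ => Real.log (-y)) ((-1) / (-x)) x :=
      (hasDerivAt_neg x).log (neg_ne_zero.mpr hx0)
    have h3 := ((h1.sub h2).div_const π).arctan.div_const π
    have hL : Real.log |1 + 1 / x| = Real.log (x + 1) - Real.log (-x) := by
      have e1 : (1:ℝ) + 1 / x = (x + 1) / x := by field_simp
      have habs : |1 + 1 / x| = (x + 1) / (-x) := by
        rw [e1, abs_div, abs_of_pos hx1, abs_of_neg hx2]
      rw [habs, Real.log_div (ne_of_gt hx1) (neg_ne_zero.mpr hx0)]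
    convert h3 using 1
    have hD : (0:ℝ) < π ^ 2 + (Real.log (x + 1) - Real.log (-x)) ^ 2 := by positivity
    show 1 / (|x| * (x + 1) * (π ^ 2 + Real.log |1 + 1 / x| ^ 2)) = _
    rw [hL, abs_of_neg hx2]
    field_simp
    simp only [Pi.sub_apply]
    ring
    all_goals rfl
  -- limits at endpoints
  have ha : Tendsto F (𝓝[>] (-1:ℝ)) (𝓝 (-(1/2))) := by
    have hadd : Tendsto (fun x : ℝ => x + 1) (𝓝[>] (-1:ℝ)) (𝓝[>] (0:ℝ)) := by
      apply tendsto_nhdsWithin_of_tendsto_nhds_of_eventually_within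
      · exact ((continuous_add_right (1:ℝ)).tendsto' (-1) 0 (by norm_num)).mono_left
          nhdsWithin_le_nhds
      · filter_upwards [self_mem_nhdsWithin] with y hy
        simpa using by linarith [mem_Ioi.mp hy]
    have hlog1 : Tendsto (fun x : ℝ => Real.log (x + 1)) (𝓝[>] (-1:ℝ)) atBot :=
      Real.tendsto_log_nhdsGT_zero.comp hadd
    have hlog2 : Tendsto (fun x : ℝ => Real.log (-x)) (𝓝[>] (-1:ℝ)) (𝓝 0) := by
      have hc : ContinuousAt (fun x : ℝ => Real.log (-x)) (-1) :=
        (Real.continuousAt_log (by norm_num)).comp (continuous_neg.continuousAt)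
      have h := hc.tendsto.mono_left (nhdsWithin_le_nhds (s := Set.Ioi (-1:ℝ)))
      simpa using h
    have hD : Tendsto (fun x : ℝ => Real.log (x + 1) - Real.log (-x)) (𝓝[>] (-1:ℝ)) atBot := by
      simpa [sub_eq_add_neg] using hlog1.atBot_add hlog2.neg
    have hDiv : Tendsto (fun x : ℝ => (Real.log (x + 1) - Real.log (-x)) / π)
        (𝓝[>] (-1:ℝ)) atBot := hD.atBot_div_const hπ
    have harctan : Tendsto (fun x : ℝ => Real.arctan ((Real.log (x + 1) - Real.log (-x)) / π))
        (𝓝[>] (-1:ℝ)) (𝓝 (-(π/2))) :=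
      (tendsto_nhds_of_tendsto_nhdsWithin Real.tendsto_arctan_atBot).comp hDiv
    have := harctan.div_const π
    have e : -(π/2)/π = -(1/2) := by field_simp
    rwa [e] at this
  have hb : Tendsto F (𝓝[<] (0:ℝ)) (𝓝 (1/2)) := by
    have hneg : Tendsto (fun x : ℝ => -x) (𝓝[<] (0:ℝ)) (𝓝[>] (0:ℝ)) := by
      apply tendsto_nhdsWithin_of_tendsto_nhds_of_eventually_within
      · simpa using (continuous_neg.tendsto (0:ℝ)).mono_left nhdsWithin_le_nhds
      · filter_upwards [self_mem_nhdsWithin] with y hy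
        simpa using neg_pos.mpr (mem_Iio.mp hy)
    have hlog2 : Tendsto (fun x : ℝ => Real.log (-x)) (𝓝[<] (0:ℝ)) atBot :=
      Real.tendsto_log_nhdsGT_zero.comp hneg
    have hlog1 : Tendsto (fun x : ℝ => Real.log (x + 1)) (𝓝[<] (0:ℝ)) (𝓝 0) := by
      have hc : ContinuousAt (fun x : ℝ => Real.log (x + 1)) 0 :=
        (Real.continuousAt_log (by norm_num)).comp ((continuous_id.add continuous_const).continuousAt)
      have h := hc.tendsto.mono_left (nhdsWithin_le_nhds (s := Set.Iio (0:ℝ)))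
      simpa using h
    have hD : Tendsto (fun x : ℝ => Real.log (x + 1) - Real.log (-x)) (𝓝[<] (0:ℝ)) atTop := by
      simpa [sub_eq_add_neg] using hlog1.add_atTop (tendsto_neg_atTop_iff.mpr hlog2)
    have hDiv : Tendsto (fun x : ℝ => (Real.log (x + 1) - Real.log (-x)) / π)
        (𝓝[<] (0:ℝ)) atTop := hD.atTop_div_const hπ
    have harctan : Tendsto (fun x : ℝ => Real.arctan ((Real.log (x + 1) - Real.log (-x)) / π))
        (𝓝[<] (0:ℝ)) (𝓝 (π/2)) :=
      (tendsto_nhds_of_tendsto_nhdsWithin Real.tendsto_arctan_atTop).comp hDiv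
    have := harctan.div_const π
    have e : (π/2)/π = (1/2 : ℝ) := by field_simp
    rwa [e] at this
  -- integrability via nonnegativity of the derivative of a continuous extension
  set G : ℝ → ℝ := Function.update (Function.update F (-1) (-(1/2))) 0 (1/2) with hGdef
  have Gderiv : ∀ x ∈ Ioo (-1:ℝ) 0, HasDerivAt G (f' x) x := by
    intro x hx
    refine (hderiv x hx).congr_of_eventuallyEq ?_
    filter_upwards [Ioo_mem_nhds hx.1 hx.2] with y hy
    rw [hGdef, Function.update_of_ne (ne_of_lt hy.2), Function.update_of_ne (ne_of_gt hy.1)]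
  have hcont : ContinuousOn G (Icc (-1:ℝ) 0) := by
    rw [hGdef, continuousOn_update_iff, continuousOn_update_iff, Icc_sdiff_right, Ico_diff_left]
    refine ⟨⟨fun z hz => (hderiv z hz).continuousAt.continuousWithinAt, ?_⟩, ?_⟩
    · exact fun _ => ha.mono_left (nhdsWithin_mono _ Ioo_subset_Ioi_self)
    · rintro -
      refine (hb.congr' ?_).mono_left (nhdsWithin_mono _ Ico_subset_Iio_self)
      filter_upwards [Ioo_mem_nhdsLT_of_mem (right_mem_Ioc.2 (by norm_num : (-1:ℝ) < 0))]
        with z hz using (Function.update_of_ne (ne_of_gt hz.1) _ _).symm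
  have hpos : ∀ x ∈ Ioo (-1:ℝ) 0, 0 ≤ f' x := by
    intro x hx
    have hx1 : (0:ℝ) ≤ x + 1 := by linarith [hx.1]
    apply div_nonneg zero_le_one
    apply mul_nonneg (mul_nonneg (abs_nonneg x) hx1)
    positivity
  have hint : IntervalIntegrable f' volume (-1) 0 := by
    apply intervalIntegral.intervalIntegrable_deriv_of_nonneg (g := G)
    · simpa [uIcc_of_le (by norm_num : (-1:ℝ) ≤ 0)] using hcont
    · simpa [min_eq_left (by norm_num : (-1:ℝ) ≤ 0), max_eq_right (by norm_num : (-1:ℝ) ≤ 0)]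
        using Gderiv
    · simpa [min_eq_left (by norm_num : (-1:ℝ) ≤ 0), max_eq_right (by norm_num : (-1:ℝ) ≤ 0)]
        using hpos
  -- conclude
  have key : ∫ x in (-1:ℝ)..0, f' x = 1/2 - (-(1/2)) :=
    intervalIntegral.integral_eq_sub_of_hasDerivAt_of_tendsto (by norm_num) hderiv hint ha hb
  have : ∫ x in Ioo (-1:ℝ) 0, f' x = 1 := by
    rw [← MeasureTheory.integral_Ioc_eq_integral_Ioo,
      ← intervalIntegral.integral_of_le (by norm_num : (-1:ℝ) ≤ 0), key]
    norm_num
  exact this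
end

section
/- For every real γ > 1, the function p(x) = sin(π/γ)/(π·|x|·(|x|^{-1/γ} + 2cos(π/γ) + |x|^{1/γ})) for x ∈ (-∞, 0) is a probability density; that is, ∫_{-∞}^0 p(x) dx = 1. -/
open MeasureTheory Real Set Filter

/-- The limiting zero density of generalized Narayana polynomials integrates to one
over `(-∞,0)`, for every real `γ > 1`. -/
theorem stmt_9 (γ : ℝ) (hγ : 1 < γ) :
    ∫ x in Set.Iio (0 : ℝ),
        Real.sin (Real.pi / γ) /
          (Real.pi * |x| *
            (|x| ^ (-(1 / γ)) + 2 * Real.cos (Real.pi / γ) + |x| ^ (1 / γ))) = 1 := by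
  have hγ0 : (0:ℝ) < γ := lt_trans one_pos hγ
  set θ : ℝ := Real.pi / γ with hθdef
  have hθpos : 0 < θ := div_pos Real.pi_pos hγ0
  have hθlt : θ < Real.pi := by
    rw [hθdef, div_lt_iff₀ hγ0]
    nlinarith [Real.pi_pos]
  set s : ℝ := Real.sin θ with hsdef
  set c : ℝ := Real.cos θ with hcdef
  have hs : 0 < s := Real.sin_pos_of_pos_of_lt_pi hθpos hθlt
  have hπ : (0:ℝ) < Real.pi := Real.pi_pos
  set F : ℝ → ℝ := fun x => s / (Real.pi * x * (x ^ (-(1 / γ)) + 2 * c + x ^ (1 / γ))) with hF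
  -- Step 1: reflect to (0, ∞)
  have step1 : (∫ x in Set.Iio (0 : ℝ),
      s / (Real.pi * |x| * (|x| ^ (-(1 / γ)) + 2 * c + |x| ^ (1 / γ))))
      = ∫ x in Set.Ioi (0 : ℝ), F x := by
    rw [← integral_Iic_eq_integral_Iio]
    rw [show (∫ x in Set.Iic (0:ℝ),
        s / (Real.pi * |x| * (|x| ^ (-(1 / γ)) + 2 * c + |x| ^ (1 / γ))))
        = ∫ x in Set.Iic (0:ℝ), F (-x) from
      setIntegral_congr_fun measurableSet_Iic (fun x hx => by
        simp only [hF]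
        rw [abs_of_nonpos (mem_Iic.mp hx)])]
    rw [integral_comp_neg_Iic, neg_zero]
  -- Step 2: substitute x = y^γ
  set G : ℝ → ℝ := fun x => γ * s / (Real.pi * ((x + c) ^ 2 + s ^ 2)) with hG
  have step2 : (∫ x in Set.Ioi (0 : ℝ), F x) = ∫ x in Set.Ioi (0 : ℝ), G x := by
    rw [← integral_comp_rpow_Ioi F hγ0.ne']
    refine setIntegral_congr_fun measurableSet_Ioi (fun x hx => ?_)
    have hx0 : 0 < x := hx
    have hxγ : (0:ℝ) < x ^ γ := Real.rpow_pos_of_pos hx0 γ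
    have h1 : (x ^ γ) ^ (1 / γ) = x := by
      rw [← Real.rpow_mul hx0.le, mul_one_div, div_self hγ0.ne', Real.rpow_one]
    have h2 : (x ^ γ) ^ (-(1 / γ)) = x⁻¹ := by
      rw [Real.rpow_neg hxγ.le, h1, ← Real.rpow_neg_one x, Real.rpow_neg_one]
    simp only [hF, hG, smul_eq_mul, h1, h2]
    have hden : x⁻¹ + 2 * c + x = ((x + c) ^ 2 + s ^ 2) / x := by
      have hcs : s ^ 2 + c ^ 2 = 1 := by
        rw [hsdef, hcdef]; exact Real.sin_sq_add_cos_sq θ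
      field_simp
      ring_nf
      nlinarith [hcs]
    rw [hden]
    have hγm1 : x ^ (γ - 1) = x ^ γ / x := by
      rw [Real.rpow_sub hx0, Real.rpow_one]
    rw [abs_of_pos hγ0, hγm1]
    have hq : (0:ℝ) < (x + c) ^ 2 + s ^ 2 := by positivity
    field_simp
  -- Step 3: evaluate via antiderivative
  set g : ℝ → ℝ := fun x => γ / Real.pi * Real.arctan ((x + c) / s) with hg
  have hderiv : ∀ x ∈ Set.Ioi (0:ℝ), HasDerivAt g (G x) x := by
    intro x _
    have h1 : HasDerivAt (fun x : ℝ => (x + c) / s) (1 / s) x := by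
      simpa using ((hasDerivAt_id x).add_const c).div_const s
    have h2 : HasDerivAt (fun x : ℝ => Real.arctan ((x + c) / s))
        (1 / (1 + ((x + c) / s) ^ 2) * (1 / s)) x :=
      (Real.hasDerivAt_arctan _).comp x h1
    have h3 := h2.const_mul (γ / Real.pi)
    convert h3 using 1
    · rfl
    · rfl
    have hq : (0:ℝ) < 1 + ((x + c) / s) ^ 2 := by positivity
    simp only [hG]
    field_simp
    ring
  have hpos : ∀ x ∈ Set.Ioi (0:ℝ), 0 ≤ G x := by
    intro x _
    have hq : (0:ℝ) < (x + c) ^ 2 + s ^ 2 := by positivity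
    positivity
  have hcont : ContinuousWithinAt g (Set.Ici (0:ℝ)) 0 := by
    apply Continuous.continuousWithinAt
    exact continuous_const.mul (Real.continuous_arctan.comp
      ((continuous_id.add continuous_const).div_const s))
  have htend : Tendsto g atTop (nhds (γ / Real.pi * (Real.pi / 2))) := by
    have h1 : Tendsto (fun x : ℝ => (x + c) / s) atTop atTop :=
      (tendsto_atTop_add_const_right atTop c tendsto_id).atTop_div_const hs
    have h2 : Tendsto (fun x : ℝ => Real.arctan ((x + c) / s)) atTop
        (nhds (Real.pi / 2)) :=
      (Real.tendsto_arctan_atTop.mono_right nhdsWithin_le_nhds).comp h1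
    exact h2.const_mul _
  have step3 : (∫ x in Set.Ioi (0:ℝ), G x) = γ / Real.pi * (Real.pi / 2) - g 0 :=
    integral_Ioi_of_hasDerivAt_of_nonneg hcont hderiv hpos htend
  -- compute g 0
  have harctan : Real.arctan (c / s) = Real.pi / 2 - θ := by
    have htan : Real.tan (Real.pi / 2 - θ) = c / s := by
      rw [Real.tan_pi_div_two_sub, Real.tan_eq_sin_div_cos, ← hsdef, ← hcdef]
      rcases eq_or_ne c 0 with h | h
      · simp [h]
      · rw [inv_div]
    rw [← htan, Real.arctan_tan (by linarith) (by linarith)]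
  have hg0 : g 0 = γ / Real.pi * (Real.pi / 2 - θ) := by
    simp only [hg, zero_add, harctan]
  calc (∫ x in Set.Iio (0 : ℝ),
        s / (Real.pi * |x| * (|x| ^ (-(1 / γ)) + 2 * c + |x| ^ (1 / γ))))
      = γ / Real.pi * (Real.pi / 2) - g 0 := by rw [step1, step2, step3]
    _ = 1 := by
        rw [hg0, hθdef]
        field_simp
        ring
end

section
/- For real t > 2, the identity ∫_{-2}^{2} log(t - x)·(1/2π)·√(4 - x²) dx = (t² - t√(t² - 4))/4 + log((t + √(t² - 4))/2) - 1/2 holds. -/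
open MeasureTheory Real intervalIntegral Set Filter Metric
open MeasureTheory Real intervalIntegral Set Filter Metric Topology
lemma basic_facts (t : ℝ) (ht : 2 < t) :
    0 < Real.sqrt (t ^ 2 - 4) ∧ Real.sqrt (t ^ 2 - 4) ^ 2 = t ^ 2 - 4 ∧
      Real.sqrt (t ^ 2 - 4) < t := by
  have h4 : (0:ℝ) < t ^ 2 - 4 := by nlinarith
  refine ⟨Real.sqrt_pos.2 h4, Real.sq_sqrt h4.le, ?_⟩
  have := Real.sqrt_lt_sqrt (by positivity) (show t ^ 2 - 4 < t ^ 2 by nlinarith)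
  calc Real.sqrt (t ^ 2 - 4) < Real.sqrt (t ^ 2) := this
    _ = t := by rw [Real.sqrt_sq (by linarith)]

lemma sqrt4_sq {x : ℝ} (hx : x ∈ Set.Icc (-2:ℝ) 2) :
    Real.sqrt (4 - x ^ 2) ^ 2 = 4 - x ^ 2 :=
  Real.sq_sqrt (by nlinarith [hx.1, hx.2])

lemma stieltjes (t : ℝ) (ht : 2 < t) :
    ∫ x in (-2:ℝ)..2, Real.sqrt (4 - x ^ 2) / (t - x) =
      Real.pi * (t - Real.sqrt (t ^ 2 - 4)) := by
  obtain ⟨hs0, hs2, hst⟩ := basic_facts t ht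
  set s := Real.sqrt (t ^ 2 - 4) with hs
  set K : ℝ → ℝ := fun x =>
    s * Real.arcsin ((4 - t * x) / (2 * (t - x))) + t * Real.arcsin (x / 2)
      - Real.sqrt (4 - x ^ 2) with hK
  have htx : ∀ x : ℝ, x ∈ Set.Icc (-2:ℝ) 2 → 0 < t - x := fun x hx => by
    have := hx.2; linarith
  have hcont : ContinuousOn K (Set.Icc (-2:ℝ) 2) := by
    apply ContinuousOn.sub
    · apply ContinuousOn.add
      · exact (Real.continuous_arcsin.comp_continuousOn
          ((continuous_const.sub (continuous_const.mul continuous_id)).continuousOn.div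
            ((continuous_const.mul (continuous_const.sub continuous_id)).continuousOn)
            (fun x hx => by have := htx x hx; show (2:ℝ) * (t - x) ≠ 0; positivity))).const_smul s
      · exact (Real.continuous_arcsin.comp (continuous_id.div_const 2)).continuousOn.const_smul t
    · exact (continuous_const.sub (continuous_pow 2)).sqrt.continuousOn
  have hderiv : ∀ x ∈ Set.Ioo (-2:ℝ) 2,
      HasDerivAt K (Real.sqrt (4 - x ^ 2) / (t - x)) x := by
    intro x hx
    rw [hK]
    obtain ⟨hx1, hx2⟩ := hx
    have hx4 : (0:ℝ) < 4 - x ^ 2 := by nlinarith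
    have htx : (0:ℝ) < t - x := by linarith
    have hq0 : 0 < Real.sqrt (4 - x ^ 2) := Real.sqrt_pos.2 hx4
    have hq2 : Real.sqrt (4 - x ^ 2) ^ 2 = 4 - x ^ 2 := Real.sq_sqrt hx4.le
    set q := Real.sqrt (4 - x ^ 2) with hqdef
    set g : ℝ := (4 - t * x) / (2 * (t - x)) with hg
    have hgsq : 1 - g ^ 2 = (s * q / (2 * (t - x))) ^ 2 := by
      rw [hg, div_pow, div_pow, mul_pow, mul_pow, hq2, hs2]
      field_simp
      ring
    have hgpos : 0 < 1 - g ^ 2 := by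
      rw [hgsq]; positivity
    have hgne1 : g ≠ 1 := by intro h; rw [h] at hgpos; norm_num at hgpos
    have hgne1' : g ≠ -1 := by intro h; rw [h] at hgpos; norm_num at hgpos
    have hdg : HasDerivAt (fun y : ℝ => (4 - t * y) / (2 * (t - y)))
        (-(t ^ 2 - 4) / (2 * (t - x) ^ 2)) x := by
      have h1 : HasDerivAt (fun y : ℝ => 4 - t * y) (-t) x := by
        simpa [Pi.sub_def] using (hasDerivAt_const x (4:ℝ)).sub ((hasDerivAt_id x).const_mul t)
      have h2 : HasDerivAt (fun y : ℝ => 2 * (t - y)) (-2) x := by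
        simpa using ((hasDerivAt_const x t).sub (hasDerivAt_id x)).const_mul 2
      have := h1.div h2 (by positivity)
      refine this.congr_deriv ?_
      field_simp
      ring
    have harc : HasDerivAt (fun y : ℝ => Real.arcsin ((4 - t * y) / (2 * (t - y))))
        ((1 / Real.sqrt (1 - g ^ 2)) * (-(t ^ 2 - 4) / (2 * (t - x) ^ 2))) x :=
      by have := (Real.hasDerivAt_arcsin hgne1' hgne1).comp x hdg; exact this
    have hqg : Real.sqrt (1 - g ^ 2) = s * q / (2 * (t - x)) := by
      rw [hgsq, Real.sqrt_sq (by positivity)]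
    rw [hqg] at harc
    have hx21 : x / 2 ≠ -1 := by
      intro h
      rw [div_eq_iff (two_ne_zero (α := ℝ))] at h
      linarith
    have hx21' : x / 2 ≠ 1 := by
      intro h
      rw [div_eq_iff (two_ne_zero (α := ℝ))] at h
      linarith
    have harc2 : HasDerivAt (fun y : ℝ => Real.arcsin (y / 2))
        ((1 / Real.sqrt (1 - (x / 2) ^ 2)) * (1 / 2)) x :=
      by have := (Real.hasDerivAt_arcsin hx21 hx21').comp x ((hasDerivAt_id x).div_const 2); exact this
    have hq1 : Real.sqrt (1 - (x / 2) ^ 2) = q / 2 := by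
      rw [show 1 - (x / 2) ^ 2 = (q / 2) ^ 2 by rw [div_pow, div_pow, hq2]; ring,
        Real.sqrt_sq (by positivity)]
    rw [hq1] at harc2
    have hinner : HasDerivAt (fun y : ℝ => 4 - y ^ 2) (-(2 * x)) x := by
      simpa [Pi.sub_def] using (hasDerivAt_const x (4:ℝ)).sub (hasDerivAt_pow 2 x)
    have hsq : HasDerivAt (fun y : ℝ => Real.sqrt (4 - y ^ 2))
        (1 / (2 * q) * (-(2 * x))) x :=
      (Real.hasDerivAt_sqrt hx4.ne').comp x hinner
    have H := ((harc.const_mul s).add (harc2.const_mul t)).sub hsq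
    refine H.congr_deriv ?_
    field_simp
    linear_combination (-1) * hq2
  have hint : IntervalIntegrable (fun x => Real.sqrt (4 - x ^ 2) / (t - x)) volume (-2) 2 := by
    apply ContinuousOn.intervalIntegrable
    rw [Set.uIcc_of_le (by norm_num)]
    exact ((continuous_const.sub (continuous_pow 2)).sqrt.continuousOn).div
      ((continuous_const.sub continuous_id).continuousOn)
      (fun x hx => (htx x hx).ne')
  have := intervalIntegral.integral_eq_sub_of_hasDerivAt_of_le (by norm_num) hcont hderiv hint
  rw [this, hK]
  have e1 : (4 - t * 2) / (2 * (t - 2)) = -1 := by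
    rw [div_eq_iff (by nlinarith)]; ring
  have e2 : (4 - t * (-2)) / (2 * (t - (-2))) = 1 := by
    rw [div_eq_iff (by nlinarith)]; ring
  simp only [e1, e2, Real.arcsin_neg_one, Real.arcsin_one]
  norm_num [Real.arcsin_one, Real.arcsin_neg_one, show ((-2:ℝ))/2 = -1 by norm_num,
    show (4:ℝ) - 2^2 = 0 by norm_num, show (4:ℝ) - (-2)^2 = 0 by norm_num, Real.sqrt_zero]
  ring

lemma semicircle_mass : ∫ x in (-2:ℝ)..2, Real.sqrt (4 - x ^ 2) = 2 * Real.pi := by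
  set V : ℝ → ℝ := fun x => x * Real.sqrt (4 - x ^ 2) / 2 + 2 * Real.arcsin (x / 2) with hV
  have hcont : ContinuousOn V (Set.Icc (-2:ℝ) 2) := by
    apply ContinuousOn.add
    · exact ((continuous_id.mul (continuous_const.sub (continuous_pow 2)).sqrt).div_const 2).continuousOn
    · exact (continuous_const.mul (Real.continuous_arcsin.comp (continuous_id.div_const 2))).continuousOn
  have hderiv : ∀ x ∈ Set.Ioo (-2:ℝ) 2, HasDerivAt V (Real.sqrt (4 - x ^ 2)) x := by
    intro x hx
    obtain ⟨hx1, hx2⟩ := hx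
    have hx4 : (0:ℝ) < 4 - x ^ 2 := by nlinarith
    have hq0 : 0 < Real.sqrt (4 - x ^ 2) := Real.sqrt_pos.2 hx4
    have hq2 : Real.sqrt (4 - x ^ 2) ^ 2 = 4 - x ^ 2 := Real.sq_sqrt hx4.le
    set q := Real.sqrt (4 - x ^ 2) with hqdef
    have hx21 : x / 2 ≠ -1 := by
      intro h
      rw [div_eq_iff (two_ne_zero (α := ℝ))] at h
      linarith
    have hx21' : x / 2 ≠ 1 := by
      intro h
      rw [div_eq_iff (two_ne_zero (α := ℝ))] at h
      linarith
    have harc2 : HasDerivAt (fun y : ℝ => Real.arcsin (y / 2))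
        ((1 / Real.sqrt (1 - (x / 2) ^ 2)) * (1 / 2)) x :=
      by have := (Real.hasDerivAt_arcsin hx21 hx21').comp x ((hasDerivAt_id x).div_const 2); exact this
    have hq1 : Real.sqrt (1 - (x / 2) ^ 2) = q / 2 := by
      rw [show 1 - (x / 2) ^ 2 = (q / 2) ^ 2 by rw [div_pow, div_pow, hq2]; ring,
        Real.sqrt_sq (by positivity)]
    rw [hq1] at harc2
    have hinner : HasDerivAt (fun y : ℝ => 4 - y ^ 2) (-(2 * x)) x := by
      simpa [Pi.sub_def] using (hasDerivAt_const x (4:ℝ)).sub (hasDerivAt_pow 2 x)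
    have hsq : HasDerivAt (fun y : ℝ => Real.sqrt (4 - y ^ 2))
        (1 / (2 * q) * (-(2 * x))) x :=
      (Real.hasDerivAt_sqrt hx4.ne').comp x hinner
    have H := ((((hasDerivAt_id x).mul hsq).div_const 2).add (harc2.const_mul 2))
    refine H.congr_deriv ?_
    field_simp
    simp only [id]
    linear_combination (-q) * hqdef + (-1) * hq2
  have hint : IntervalIntegrable (fun x => Real.sqrt (4 - x ^ 2)) volume (-2) 2 :=
    ((continuous_const.sub (continuous_pow 2)).sqrt).intervalIntegrable _ _
  have := intervalIntegral.integral_eq_sub_of_hasDerivAt_of_le (by norm_num) hcont hderiv hint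
  rw [this, hV]
  norm_num [show ((-2:ℝ))/2 = -1 by norm_num, show ((2:ℝ))/2 = 1 by norm_num,
    Real.arcsin_one, Real.arcsin_neg_one,
    show (4:ℝ) - 2 ^ 2 = 0 by norm_num, show (4:ℝ) - (-2) ^ 2 = 0 by norm_num]
  ring

noncomputable def scF (u : ℝ) : ℝ :=
  ∫ x in (-2:ℝ)..2, Real.log (u - x) * (1 / (2 * Real.pi)) * Real.sqrt (4 - x ^ 2)

lemma scF_hasDeriv (t : ℝ) (ht : 2 < t) :
    HasDerivAt scF ((t - Real.sqrt (t ^ 2 - 4)) / 2) t := by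
  obtain ⟨hs0, hs2, hst⟩ := basic_facts t ht
  set ε := (t - 2) / 2 with hε
  have hε0 : 0 < ε := by rw [hε]; linarith
  have hball : ∀ u ∈ ball t ε, ∀ x ∈ Set.uIoc (-2:ℝ) 2, ε ≤ u - x := by
    intro u hu x hx
    rw [mem_ball, Real.dist_eq, abs_lt] at hu
    have hx2 : x ≤ 2 := ((Set.uIoc_of_le (by norm_num : (-2:ℝ) ≤ 2)) ▸ hx).2
    rw [hε] at *
    linarith
  have key := intervalIntegral.hasDerivAt_integral_of_dominated_loc_of_deriv_le
    (F := fun u x => Real.log (u - x) * (1 / (2 * Real.pi)) * Real.sqrt (4 - x ^ 2))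
    (F' := fun u x => (u - x)⁻¹ * (1 / (2 * Real.pi)) * Real.sqrt (4 - x ^ 2))
    (x₀ := t) (a := -2) (b := 2) (bound := fun _ => ε⁻¹ * (1 / (2 * Real.pi)) * 2) (μ := volume)
    (ball_mem_nhds t hε0) ?_ ?_ ?_ ?_ ?_ ?_
  · have hd := key.2
    have heval : (∫ x in (-2:ℝ)..2, (t - x)⁻¹ * (1 / (2 * Real.pi)) * Real.sqrt (4 - x ^ 2))
        = (t - Real.sqrt (t ^ 2 - 4)) / 2 := by
      have : ∀ x : ℝ, (t - x)⁻¹ * (1 / (2 * Real.pi)) * Real.sqrt (4 - x ^ 2)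
          = (1 / (2 * Real.pi)) * (Real.sqrt (4 - x ^ 2) / (t - x)) := by
        intro x; ring
      rw [intervalIntegral.integral_congr (fun x _ => this x),
        intervalIntegral.integral_const_mul, stieltjes t ht]
      have hpi : Real.pi ≠ 0 := Real.pi_ne_zero
      field_simp
    rw [heval] at hd
    exact hd
  · refine Filter.Eventually.of_forall (fun u => Measurable.aestronglyMeasurable ?_)
    exact ((Real.measurable_log.comp (measurable_const.sub measurable_id)).mul
      measurable_const).mul (continuous_const.sub (continuous_pow 2)).sqrt.measurable
  · apply ContinuousOn.intervalIntegrable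
    rw [Set.uIcc_of_le (by norm_num : (-2:ℝ) ≤ 2)]
    apply ContinuousOn.mul
    · apply ContinuousOn.mul
      · exact Real.continuousOn_log.comp ((continuous_const.sub continuous_id).continuousOn)
          (fun x hx => Set.mem_compl_singleton_iff.2 (by have := hx.2; exact (by linarith : (0:ℝ) < t - x).ne'))
      · exact continuousOn_const
    · exact (continuous_const.sub (continuous_pow 2)).sqrt.continuousOn
  · refine Measurable.aestronglyMeasurable ?_
    exact ((measurable_const.sub measurable_id).inv.mul measurable_const).mul
      (continuous_const.sub (continuous_pow 2)).sqrt.measurable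
  · refine Filter.Eventually.of_forall (fun x hx u hu => ?_)
    have h1 : ε ≤ u - x := hball u hu x hx
    have hux : 0 < u - x := lt_of_lt_of_le hε0 h1
    have hq : 0 ≤ Real.sqrt (4 - x ^ 2) := Real.sqrt_nonneg _
    have hq2 : Real.sqrt (4 - x ^ 2) ≤ 2 := by
      rw [show (2:ℝ) = Real.sqrt 4 by rw [show (4:ℝ) = 2 ^ 2 by norm_num, Real.sqrt_sq]; norm_num]
      exact Real.sqrt_le_sqrt (by nlinarith)
    have hc : (0:ℝ) ≤ 1 / (2 * Real.pi) := by positivity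
    rw [Real.norm_eq_abs, abs_of_nonneg (by positivity)]
    have hinv : (u - x)⁻¹ ≤ ε⁻¹ := by
      apply inv_anti₀ hε0 h1
    calc (u - x)⁻¹ * (1 / (2 * Real.pi)) * Real.sqrt (4 - x ^ 2)
        ≤ ε⁻¹ * (1 / (2 * Real.pi)) * Real.sqrt (4 - x ^ 2) := by
          apply mul_le_mul_of_nonneg_right (mul_le_mul_of_nonneg_right hinv hc) hq
      _ ≤ ε⁻¹ * (1 / (2 * Real.pi)) * 2 := by
          apply mul_le_mul_of_nonneg_left hq2 (by positivity)
  · exact intervalIntegrable_const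
  · refine Filter.Eventually.of_forall (fun x hx u hu => ?_)
    have hux : 0 < u - x := lt_of_lt_of_le hε0 (hball u hu x hx)
    have hlog : HasDerivAt (fun u : ℝ => Real.log (u - x)) (u - x)⁻¹ u := by
      simpa [Function.comp_def] using (Real.hasDerivAt_log hux.ne').comp u ((hasDerivAt_id u).sub_const x)
    exact (hlog.mul_const _).mul_const _

noncomputable def scR (u : ℝ) : ℝ :=
  (u ^ 2 - u * Real.sqrt (u ^ 2 - 4)) / 4 + Real.log ((u + Real.sqrt (u ^ 2 - 4)) / 2) - 1 / 2

lemma scR_hasDeriv (t : ℝ) (ht : 2 < t) :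
    HasDerivAt scR ((t - Real.sqrt (t ^ 2 - 4)) / 2) t := by
  obtain ⟨hs0, hs2, hst⟩ := basic_facts t ht
  set s := Real.sqrt (t ^ 2 - 4) with hs
  have h4 : (0:ℝ) < t ^ 2 - 4 := by nlinarith
  have hinner : HasDerivAt (fun u : ℝ => u ^ 2 - 4) (2 * t) t := by
    simpa using (hasDerivAt_pow 2 t).sub_const 4
  have hsder : HasDerivAt (fun u : ℝ => Real.sqrt (u ^ 2 - 4)) (1 / (2 * s) * (2 * t)) t :=
    (Real.hasDerivAt_sqrt h4.ne').comp t hinner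
  have h1 : HasDerivAt (fun u : ℝ => (u ^ 2 - u * Real.sqrt (u ^ 2 - 4)) / 4)
      ((2 * t ^ 1 - (1 * s + t * (1 / (2 * s) * (2 * t)))) / 4) t :=
    ((hasDerivAt_pow 2 t).sub ((hasDerivAt_id t).mul hsder)).div_const 4
  have hts : (0:ℝ) < (t + s) / 2 := by positivity
  have h2 : HasDerivAt (fun u : ℝ => Real.log ((u + Real.sqrt (u ^ 2 - 4)) / 2))
      (((t + s) / 2)⁻¹ * ((1 + 1 / (2 * s) * (2 * t)) / 2)) t :=
    by have := (Real.hasDerivAt_log hts.ne').comp t (((hasDerivAt_id t).add hsder).div_const 2); exact this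
  have H := (h1.add h2).sub_const (1 / 2 : ℝ)
  refine H.congr_deriv ?_
  have hts' : t + s ≠ 0 := by positivity
  field_simp
  linear_combination 2 * (t + s) * hs2

lemma haux_const (L : ℝ) :
    ∫ x in (-2:ℝ)..2, L * (1 / (2 * Real.pi)) * Real.sqrt (4 - x ^ 2) = L := by
  have : (fun x : ℝ => L * (1 / (2 * Real.pi)) * Real.sqrt (4 - x ^ 2))
      = fun x => (L * (1 / (2 * Real.pi))) * Real.sqrt (4 - x ^ 2) := rfl
  rw [this, intervalIntegral.integral_const_mul, semicircle_mass]
  field_simp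

lemma scF_bounds (t : ℝ) (ht : 2 < t) :
    Real.log (t - 2) ≤ scF t ∧ scF t ≤ Real.log (t + 2) := by
  have hc : (0:ℝ) ≤ 1 / (2 * Real.pi) := by positivity
  have hintf : IntervalIntegrable
      (fun x => Real.log (t - x) * (1 / (2 * Real.pi)) * Real.sqrt (4 - x ^ 2)) volume (-2) 2 := by
    apply ContinuousOn.intervalIntegrable
    rw [Set.uIcc_of_le (by norm_num : (-2:ℝ) ≤ 2)]
    apply ContinuousOn.mul
    · apply ContinuousOn.mul
      · exact Real.continuousOn_log.comp ((continuous_const.sub continuous_id).continuousOn)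
          (fun x hx => Set.mem_compl_singleton_iff.2
            (by have := hx.2; exact (by linarith : (0:ℝ) < t - x).ne'))
      · exact continuousOn_const
    · exact (continuous_const.sub (continuous_pow 2)).sqrt.continuousOn
  have hintc : ∀ L : ℝ, IntervalIntegrable
      (fun x => L * (1 / (2 * Real.pi)) * Real.sqrt (4 - x ^ 2)) volume (-2) 2 := fun L =>
    ((continuous_const.mul (continuous_const.sub (continuous_pow 2)).sqrt).intervalIntegrable _ _)
  constructor
  · rw [← haux_const (Real.log (t - 2))]
    apply intervalIntegral.integral_mono_on (by norm_num) (hintc _) hintf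
    intro x hx
    have h1 : (0:ℝ) < t - 2 := by linarith
    have h2 : t - 2 ≤ t - x := by have := hx.2; linarith
    apply mul_le_mul_of_nonneg_right _ (Real.sqrt_nonneg _)
    exact mul_le_mul_of_nonneg_right (Real.log_le_log h1 h2) hc
  · rw [← haux_const (Real.log (t + 2))]
    apply intervalIntegral.integral_mono_on (by norm_num) hintf (hintc _)
    intro x hx
    have h1 : (0:ℝ) < t - x := by have := hx.2; linarith
    have h2 : t - x ≤ t + 2 := by have := hx.1; linarith
    apply mul_le_mul_of_nonneg_right _ (Real.sqrt_nonneg _)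
    exact mul_le_mul_of_nonneg_right (Real.log_le_log h1 h2) hc

lemma log_shift_tendsto (c : ℝ) :
    Tendsto (fun t : ℝ => Real.log (t + c) - Real.log t) atTop (𝓝 0) := by
  have h1 : Tendsto (fun t : ℝ => (t + c) / t) atTop (𝓝 1) := by
    have he : (fun t : ℝ => 1 + c / t) =ᶠ[atTop] fun t => (t + c) / t := by
      filter_upwards [eventually_ne_atTop (0:ℝ)] with t ht
      field_simp
    rw [← tendsto_congr' he]
    have hz : Tendsto (fun t : ℝ => c / t) atTop (𝓝 0) :=
      Tendsto.div_atTop tendsto_const_nhds tendsto_id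
    simpa using (tendsto_const_nhds : Tendsto (fun _ : ℝ => (1:ℝ)) atTop (𝓝 1)).add hz
  have h2 := ((Real.continuousAt_log one_ne_zero).tendsto).comp h1
  rw [Real.log_one] at h2
  apply h2.congr'
  filter_upwards [eventually_gt_atTop (max 0 (-c))] with t ht
  have ht0 : (0:ℝ) < t := lt_of_le_of_lt (le_max_left _ _) ht
  have htc : (0:ℝ) < t + c := by have := lt_of_le_of_lt (le_max_right _ _) ht; linarith
  simp only [Function.comp]
  rw [Real.log_div htc.ne' ht0.ne']

lemma scF_tendsto : Tendsto (fun t : ℝ => scF t - Real.log t) atTop (𝓝 0) := by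
  have hlow : Tendsto (fun t : ℝ => Real.log (t + (-2)) - Real.log t) atTop (𝓝 0) :=
    log_shift_tendsto (-2)
  have hhigh : Tendsto (fun t : ℝ => Real.log (t + 2) - Real.log t) atTop (𝓝 0) :=
    log_shift_tendsto 2
  apply tendsto_of_tendsto_of_tendsto_of_le_of_le' hlow hhigh
  · filter_upwards [eventually_gt_atTop (2:ℝ)] with t ht
    have := (scF_bounds t ht).1
    have he : t + (-2) = t - 2 := by ring
    rw [he]
    linarith
  · filter_upwards [eventually_gt_atTop (2:ℝ)] with t ht
    have := (scF_bounds t ht).2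
    linarith

lemma sqrt_ratio_tendsto :
    Tendsto (fun t : ℝ => Real.sqrt (t ^ 2 - 4) / t) atTop (𝓝 1) := by
  have h1 : Tendsto (fun t : ℝ => 1 - 4 / t ^ 2) atTop (𝓝 1) := by
    have hz : Tendsto (fun t : ℝ => 4 / t ^ 2) atTop (𝓝 0) :=
      Tendsto.div_atTop tendsto_const_nhds
        (tendsto_pow_atTop (two_ne_zero) : Tendsto (fun t : ℝ => t ^ 2) atTop atTop)
    simpa using (tendsto_const_nhds : Tendsto (fun _ : ℝ => (1:ℝ)) atTop (𝓝 1)).sub hz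
  have h2 := (Real.continuous_sqrt.tendsto 1).comp h1
  rw [show Real.sqrt 1 = 1 from Real.sqrt_one] at h2
  apply h2.congr'
  filter_upwards [eventually_gt_atTop (2:ℝ)] with t ht
  have ht0 : (0:ℝ) < t := by linarith
  simp only [Function.comp]
  rw [show 1 - 4 / t ^ 2 = (t ^ 2 - 4) / t ^ 2 by field_simp,
    Real.sqrt_div (by nlinarith) , Real.sqrt_sq ht0.le]

lemma scR_tendsto : Tendsto (fun t : ℝ => scR t - Real.log t) atTop (𝓝 0) := by
  have hst := sqrt_ratio_tendsto
  have hmain : Tendsto (fun t : ℝ =>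
      1 / (1 + Real.sqrt (t ^ 2 - 4) / t) - 1 / 2
        + Real.log ((1 + Real.sqrt (t ^ 2 - 4) / t) / 2)) atTop (𝓝 0) := by
    have h1 : Tendsto (fun t : ℝ => 1 + Real.sqrt (t ^ 2 - 4) / t) atTop (𝓝 2) := by
      have := (tendsto_const_nhds : Tendsto (fun _ : ℝ => (1:ℝ)) atTop (𝓝 1)).add hst
      norm_num at this
      exact this
    have h2 : Tendsto (fun t : ℝ => 1 / (1 + Real.sqrt (t ^ 2 - 4) / t)) atTop (𝓝 (1 / 2)) :=
      tendsto_const_nhds.div h1 (by norm_num)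
    have h3 : Tendsto (fun t : ℝ => (1 + Real.sqrt (t ^ 2 - 4) / t) / 2) atTop (𝓝 1) := by
      have := h1.div_const 2
      norm_num at this
      exact this
    have h4 := ((Real.continuousAt_log one_ne_zero).tendsto).comp h3
    rw [Real.log_one] at h4
    have h5 := (h2.sub (tendsto_const_nhds : Tendsto (fun _ : ℝ => (1/2:ℝ)) atTop (𝓝 (1/2)))).add h4
    norm_num at h5
    simpa [one_div] using h5
  apply hmain.congr'
  filter_upwards [eventually_gt_atTop (2:ℝ)] with t ht
  obtain ⟨hs0, hs2, hstt⟩ := basic_facts t ht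
  set s := Real.sqrt (t ^ 2 - 4) with hs
  have ht0 : (0:ℝ) < t := by linarith
  have hts : (0:ℝ) < t + s := by positivity
  rw [scR]
  have e1 : 1 / (1 + s / t) = t / (t + s) := by
    rw [show (1:ℝ) + s / t = (t + s) / t by rw [add_div, div_self ht0.ne'], one_div_div]
  have e2 : (1 + s / t) / 2 = (t + s) / (2 * t) := by
    rw [show (1:ℝ) + s / t = (t + s) / t by rw [add_div, div_self ht0.ne']]
    rw [div_div]
    ring_nf
  have e3 : Real.log ((t + s) / (2 * t)) = Real.log ((t + s) / 2) - Real.log t := by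
    rw [show (t + s) / (2 * t) = ((t + s) / 2) / t by ring, Real.log_div (by positivity) ht0.ne']
  have e4 : t / (t + s) = (t ^ 2 - t * s) / 4 := by
    rw [div_eq_div_iff hts.ne' (by norm_num : (4:ℝ) ≠ 0)]
    linear_combination t * hs2
  rw [e1, e2, e3, e4]
  ring

/-- Logarithmic potential of the standard semicircle law at real `t > 2`. -/
theorem stmt_13 (t : ℝ) (ht : 2 < t) :
    ∫ x in (-2 : ℝ)..2, Real.log (t - x) * (1 / (2 * Real.pi)) * Real.sqrt (4 - x ^ 2) =
      (t ^ 2 - t * Real.sqrt (t ^ 2 - 4)) / 4 +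
        Real.log ((t + Real.sqrt (t ^ 2 - 4)) / 2) - 1 / 2 := by
  have hkey : scF t = scR t := by
    have hconst : ∀ b, t ≤ b → scF b - scR b = scF t - scR t := by
      intro b hb
      have h0 : ∀ u ∈ Set.uIcc t b, HasDerivAt (fun u => scF u - scR u) ((fun _ : ℝ => (0:ℝ)) u) u := by
        intro u hu
        rw [Set.uIcc_of_le hb] at hu
        have hu2 : 2 < u := lt_of_lt_of_le ht hu.1
        simpa [Pi.sub_def] using (scF_hasDeriv u hu2).sub (scR_hasDeriv u hu2)
      have := intervalIntegral.integral_eq_sub_of_hasDerivAt h0 intervalIntegrable_const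
      simp only [intervalIntegral.integral_const, smul_eq_mul, mul_zero] at this
      linarith
    have hlim0 : Tendsto (fun b => scF b - scR b) atTop (𝓝 0) := by
      have := scF_tendsto.sub scR_tendsto
      norm_num at this
      apply this.congr
      intro b
      ring
    have hlimc : Tendsto (fun b => scF b - scR b) atTop (𝓝 (scF t - scR t)) := by
      apply Tendsto.congr' _ tendsto_const_nhds
      filter_upwards [eventually_ge_atTop t] with b hb
      exact (hconst b hb).symm
    have := tendsto_nhds_unique hlimc hlim0
    linarith
  simpa [scF, scR] using hkey
end
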